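/- Let A ⊆ ℝ² be a Lebesgue-measurable set with positive Lebesgue measure. Then A contains the three vertices of a (nondegenerate) equilateral triangle; that is, there exist points x₀, x₁, x₂ ∈ A with x₀ ≠ x₁ and dist(x₀,x₁) = dist(x₀,x₂) = dist(x₁,x₂). -/

import Mathlib

open MeasureTheory

open Metric ENNReal

private noncomputable def omg : ℂ := (1/2 : ℝ) + (Real.sqrt 3 / 2 : ℝ) * Complex.I

private lemma omg_normSq : Complex.normSq omg = 1 := by
  simp [omg, Complex.normSq_apply]
  rw [div_mul_div_comm, Real.mul_self_sqrt (by norm_num)]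
  norm_num

private lemma omg_abs : ‖omg‖ = 1 := by
  rw [Complex.norm_def, omg_normSq, Real.sqrt_one]

private lemma one_sub_omg_abs : ‖(1 - omg)‖ = 1 := by
  have : (1 : ℂ) - omg = (1/2 : ℝ) - (Real.sqrt 3 / 2 : ℝ) * Complex.I := by
    simp [omg]; ring
  rw [this, Complex.norm_def, Complex.normSq_apply]
  simp
  rw [div_mul_div_comm, Real.mul_self_sqrt (by norm_num)]
  norm_num

private noncomputable def omgc : Circle := ⟨omg, show omg ∈ sphere (0:ℂ) 1 from by
  rw [mem_sphere_zero_iff_norm]; exact omg_abs⟩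

private lemma omgc_coe : (omgc : ℂ) = omg := rfl

private lemma rot_mp (x : ℂ) : MeasurePreserving (fun z : ℂ => x + omg * (z - x)) volume volume := by
  have h1 : MeasurePreserving (fun z : ℂ => z - x) volume volume :=
    measurePreserving_sub_right volume x
  have h2 : MeasurePreserving (rotation omgc) volume volume :=
    (rotation omgc).measurePreserving
  have h3 : MeasurePreserving (fun z : ℂ => x + z) volume volume :=
    measurePreserving_add_left volume x
  have heq : (fun z : ℂ => x + omg * (z - x))
      = (fun z : ℂ => x + z) ∘ (rotation omgc) ∘ (fun z : ℂ => z - x) := by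
    funext z; simp [Function.comp, omgc_coe]
  rw [heq]
  exact (h3.comp h2).comp h1

private lemma complex_triangle (B : Set ℂ) (hB : MeasurableSet B) (hpos : 0 < volume B) :
    ∃ x₀ ∈ B, ∃ x₁ ∈ B, ∃ x₂ ∈ B,
      x₀ ≠ x₁ ∧ dist x₀ x₁ = dist x₀ x₂ ∧ dist x₀ x₁ = dist x₁ x₂ := by
  -- get a density point in B
  have hres : (volume.restrict B) ≠ 0 := by
    intro h
    have : (volume.restrict B) Set.univ = 0 := by rw [h]; rfl
    rw [Measure.restrict_apply_univ] at this
    exact hpos.ne' this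
  haveI : (ae (volume.restrict B)).NeBot := ae_neBot.2 hres
  obtain ⟨x, hxB, hx⟩ :=
    ((ae_restrict_mem hB).and (Besicovitch.ae_tendsto_measure_inter_div volume B)).exists
  -- choose a radius with density > 299/300
  have h1 : (299/300 : ℝ≥0∞) < 1 := by
    rw [ENNReal.div_lt_iff (by norm_num) (by norm_num)]; norm_num
  have hev := hx.eventually (isOpen_Ioi.mem_nhds h1)
  obtain ⟨r, hrt, hrpos⟩ := (hev.and self_mem_nhdsWithin).exists
  set c := volume (closedBall x r) with hc
  have hc0 : c ≠ 0 := (measure_closedBall_pos volume x hrpos).ne'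
  have hcT : c ≠ ⊤ := measure_closedBall_lt_top.ne
  -- the rotation about x
  set R : ℂ → ℂ := fun z => x + omg * (z - x) with hR
  have hRdist : ∀ z : ℂ, dist (R z) x = dist z x := by
    intro z
    rw [Complex.dist_eq, Complex.dist_eq, hR]
    simp only
    have : x + omg * (z - x) - x = omg * (z - x) := by ring
    rw [this, norm_mul, omg_abs, one_mul]
  -- sets
  set N : Set ℂ := closedBall x r \ B with hN
  have hNmeas : MeasurableSet N := measurableSet_closedBall.diff hB
  set B' : Set ℂ := closedBall x (r/10) with hB'
  have hB'sub : B' ⊆ closedBall x r :=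
    closedBall_subset_closedBall (by linarith)
  set G : Set ℂ := B' ∩ B ∩ R ⁻¹' B with hG
  -- measure bounds
  have key : volume B' ≤ volume G + volume N + volume N := by
    have hsub : B' ⊆ G ∪ (N ∪ R ⁻¹' N) := by
      intro z hz
      by_cases h1 : z ∈ B
      · by_cases h2 : R z ∈ B
        · exact Or.inl ⟨⟨hz, h1⟩, h2⟩
        · refine Or.inr (Or.inr ⟨?_, h2⟩)
          have hz' : dist z x ≤ r / 10 := mem_closedBall.1 hz
          have hz2 : dist (R z) x ≤ r / 10 := by rw [hRdist]; exact hz'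
          exact mem_closedBall.2 (by linarith)
      · exact Or.inr (Or.inl ⟨hB'sub hz, h1⟩)
    calc volume B' ≤ volume (G ∪ (N ∪ R ⁻¹' N)) := measure_mono hsub
      _ ≤ volume G + (volume N + volume (R ⁻¹' N)) :=
          le_trans (measure_union_le _ _) (by gcongr; exact measure_union_le _ _)
      _ = volume G + volume N + volume N := by
          rw [(rot_mp x).measure_preimage hNmeas.nullMeasurableSet]; ring
  -- volume of small ball
  have hballs : c = 100 * volume B' := by
    rw [hc, hB', Measure.addHaar_closedBall volume x hrpos.le,
      Measure.addHaar_closedBall volume x (by linarith : (0:ℝ) ≤ r/10),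
      Complex.finrank_real_complex]
    rw [← mul_assoc, ← ENNReal.ofReal_ofNat, ← ENNReal.ofReal_mul (by norm_num)]
    congr 1
    ring
  -- pass to reals
  have haineq := hrt
  set a := volume (B ∩ closedBall x r) with ha
  have haT : a ≠ ⊤ := (lt_of_le_of_lt (measure_mono Set.inter_subset_right)
    measure_closedBall_lt_top).ne
  have hNc : volume N + a = c := by
    rw [hN, ha, Set.inter_comm]
    rw [add_comm]
    exact measure_inter_add_diff _ hB
  have hNT : volume N ≠ ⊤ := by
    intro h; rw [h] at hNc; simp at hNc; exact hcT hNc.symm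
  have hB'T : volume B' ≠ ⊤ := (lt_of_le_of_lt (measure_mono hB'sub)
    measure_closedBall_lt_top).ne
  have hGT : volume G ≠ ⊤ := (lt_of_le_of_lt
    (measure_mono (Set.inter_subset_left.trans Set.inter_subset_left))
    (hB'T.lt_top)).ne
  -- real versions
  set cr := c.toReal with hcr
  have hcr0 : 0 < cr := ENNReal.toReal_pos hc0 hcT
  have har : (299/300) * cr < a.toReal := by
    have hdivT : a / c ≠ ⊤ := (ENNReal.div_lt_top haT hc0).ne
    have := ENNReal.toReal_strict_mono hdivT haineq
    rw [ENNReal.toReal_div] at this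
    norm_num at this
    calc (299/300) * cr < (a.toReal / cr) * cr := by
          apply mul_lt_mul_of_pos_right _ hcr0
          exact this
      _ = a.toReal := by field_simp
  have hNr : (volume N).toReal ≤ cr / 300 := by
    have : (volume N).toReal + a.toReal = cr := by
      rw [← ENNReal.toReal_add hNT haT, hNc]
    linarith
  have hB'r : (volume B').toReal = cr / 100 := by
    have : cr = 100 * (volume B').toReal := by
      rw [hcr, hballs, ENNReal.toReal_mul]; norm_num
    linarith
  have hGr : 0 < (volume G).toReal := by
    have hkr : (volume B').toReal ≤ (volume G).toReal + (volume N).toReal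
        + (volume N).toReal := by
      have := ENNReal.toReal_mono (by
        rw [ENNReal.add_ne_top, ENNReal.add_ne_top]
        exact ⟨⟨hGT, hNT⟩, hNT⟩) key
      rwa [ENNReal.toReal_add (by rw [ENNReal.add_ne_top]; exact ⟨hGT, hNT⟩) hNT,
        ENNReal.toReal_add hGT hNT] at this
    rw [hB'r] at hkr
    linarith
  have hGpos : 0 < volume G := by
    by_contra h
    push_neg at h
    rw [le_zero_iff] at h
    rw [h] at hGr
    simp at hGr
  -- extract a point of G different from x
  have hx1 : ∃ y ∈ G, y ≠ x := by
    by_contra h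
    push_neg at h
    have hsub : G ⊆ {x} := fun y hy => h y hy
    have hle : volume G ≤ volume ({x} : Set ℂ) := measure_mono hsub
    rw [measure_singleton] at hle
    exact hGpos.ne' (le_antisymm hle zero_le)
  obtain ⟨x₁, hx₁G, hx₁ne⟩ := hx1
  refine ⟨x, hxB, x₁, hx₁G.1.2, R x₁, hx₁G.2, fun h => hx₁ne h.symm, ?_, ?_⟩
  · rw [dist_comm x x₁, ← hRdist x₁, dist_comm x (R x₁)]
  · rw [Complex.dist_eq, Complex.dist_eq, hR]
    simp only
    have h2 : x₁ - (x + omg * (x₁ - x)) = (1 - omg) * (x₁ - x) := by ring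
    rw [h2, norm_mul, one_sub_omg_abs, one_mul]
    exact norm_sub_rev x x₁


/-- Every Lebesgue-measurable subset of the plane with positive measure
contains the three vertices of a nondegenerate equilateral triangle. -/
theorem nonnull_contains_equilateral_triangle
    (A : Set (EuclideanSpace ℝ (Fin 2))) (hA : MeasurableSet A) (hpos : 0 < volume A) :
    ∃ x₀ ∈ A, ∃ x₁ ∈ A, ∃ x₂ ∈ A,
      x₀ ≠ x₁ ∧ dist x₀ x₁ = dist x₀ x₂ ∧ dist x₀ x₁ = dist x₁ x₂ := by
  set e := Complex.orthonormalBasisOneI.repr with he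
  set B : Set ℂ := e ⁻¹' A with hBdef
  have hmp : MeasurePreserving e volume volume := e.measurePreserving
  have hBm : MeasurableSet B := hA.preimage hmp.measurable
  have hBpos : 0 < volume B := by
    rw [hBdef, hmp.measure_preimage hA.nullMeasurableSet]
    exact hpos
  obtain ⟨x₀, h₀, x₁, h₁, x₂, h₂, hne, hd1, hd2⟩ := complex_triangle B hBm hBpos
  refine ⟨e x₀, h₀, e x₁, h₁, e x₂, h₂, fun h => hne (e.injective h), ?_, ?_⟩
  · rw [e.dist_map, e.dist_map]; exact hd1
  · rw [e.dist_map, e.dist_map]; exact hd2
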